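/- Let g : Θ → ℝ be L-smooth on a convex compact set Θ contained in a ball of radius R, with g_max ≥ max_θ ‖∇g(θ)‖. Suppose at each step θ_{t+1} = proj_Θ(θ_t − (1/L)(∇g(θ_t) + e_t)) with error ‖e_t‖ ≤ g_max. Then the stationarity measure X_t := −min{⟨∇g(θ_t) + e_t, θ − θ_t⟩ : θ ∈ Θ, ‖θ − θ_t‖ ≤ 1} satisfies ‖θ_{t+1} − θ_t‖ ≥ X_t / (2(g_max + LR)). -/
import Mathlib


open scoped RealInnerProductSpace

/-- The inexact projected gradient step moves at least X_t / (2(g_max + LR)), where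
    X_t is the (error-perturbed) first-order stationarity measure. -/
theorem projected_step_movement_lower_bound {n : ℕ}
    (g : EuclideanSpace ℝ (Fin n) → ℝ)
    (G : EuclideanSpace ℝ (Fin n) → EuclideanSpace ℝ (Fin n))
    (Θ : Set (EuclideanSpace ℝ (Fin n))) (L R gmax : ℝ)
    (hL : 0 < L) (hR : 0 < R) (hgmax1 : 1 ≤ gmax)
    (hconv : Convex ℝ Θ) (hcpt : IsCompact Θ)
    (hball : Θ ⊆ Metric.closedBall 0 R)
    (hgrad : ∀ θ, HasGradientAt g (G θ) θ)
    (hgmax : ∀ θ ∈ Θ, ‖G θ‖ ≤ gmax)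
    (θt θnext e : EuclideanSpace ℝ (Fin n))
    (hθt : θt ∈ Θ) (hθnext : θnext ∈ Θ) (he : ‖e‖ ≤ gmax)
    (hproj : ∀ θ ∈ Θ, ⟪θt - (1/L) • (G θt + e) - θnext, θ - θnext⟫ ≤ 0) :
    -sInf ((fun θ => ⟪G θt + e, θ - θt⟫) '' {θ | θ ∈ Θ ∧ ‖θ - θt‖ ≤ 1})
      ≤ 2 * (gmax + L * R) * ‖θnext - θt‖ := by
  set v := G θt + e with hv
  set d := ‖θnext - θt‖ with hd
  have hdnn : 0 ≤ d := norm_nonneg _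
  have hvnorm : ‖v‖ ≤ 2 * gmax := by
    calc ‖v‖ ≤ ‖G θt‖ + ‖e‖ := norm_add_le _ _
      _ ≤ gmax + gmax := add_le_add (hgmax θt hθt) he
      _ = 2 * gmax := by ring
  have hθnR : ‖θnext‖ ≤ R := by
    simpa [Metric.mem_closedBall, dist_zero_right] using hball hθnext
  have key : ∀ θ ∈ Θ, ‖θ - θt‖ ≤ 1 →
      -(2 * (gmax + L * R) * d) ≤ ⟪v, θ - θt⟫ := by
    intro θ hθ _
    have hθR : ‖θ‖ ≤ R := by
      simpa [Metric.mem_closedBall, dist_zero_right] using hball hθ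
    have h1 := hproj θ hθ
    have hexp : ⟪θt - (1/L) • v - θnext, θ - θnext⟫
        = ⟪θt - θnext, θ - θnext⟫ - (1/L) * ⟪v, θ - θnext⟫ := by
      rw [sub_right_comm, inner_sub_left, real_inner_smul_left]
    rw [hexp] at h1
    have h2 : ⟪θt - θnext, θ - θnext⟫ ≤ (1/L) * ⟪v, θ - θnext⟫ := by linarith
    have h3 : L * ⟪θt - θnext, θ - θnext⟫ ≤ ⟪v, θ - θnext⟫ := by
      have := mul_le_mul_of_nonneg_left h2 hL.le
      calc L * ⟪θt - θnext, θ - θnext⟫ ≤ L * ((1/L) * ⟪v, θ - θnext⟫) := this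
        _ = ⟪v, θ - θnext⟫ := by field_simp
    have hsplit : ⟪v, θ - θt⟫ = ⟪v, θ - θnext⟫ + ⟪v, θnext - θt⟫ := by
      rw [← inner_add_right, sub_add_sub_cancel]
    have h2R : ‖θ - θnext‖ ≤ 2 * R := by
      calc ‖θ - θnext‖ ≤ ‖θ‖ + ‖θnext‖ := norm_sub_le _ _
        _ ≤ R + R := add_le_add hθR hθnR
        _ = 2 * R := by ring
    have hn1 : ‖θt - θnext‖ * ‖θ - θnext‖ ≤ d * (2 * R) := by
      rw [norm_sub_rev]
      exact mul_le_mul_of_nonneg_left h2R hdnn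
    have hb1 : -(d * (2 * R)) ≤ ⟪θt - θnext, θ - θnext⟫ := by
      have := neg_le_of_abs_le (abs_real_inner_le_norm (θt - θnext) (θ - θnext))
      linarith
    have hb1' : L * (-(d * (2 * R))) ≤ L * ⟪θt - θnext, θ - θnext⟫ :=
      mul_le_mul_of_nonneg_left hb1 hL.le
    have hb2 : -(2 * gmax * d) ≤ ⟪v, θnext - θt⟫ := by
      have h := neg_le_of_abs_le (abs_real_inner_le_norm v (θnext - θt))
      have : ‖v‖ * d ≤ 2 * gmax * d := mul_le_mul_of_nonneg_right hvnorm hdnn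
      linarith
    nlinarith [h3, hb1', hb2, hsplit]
  rw [neg_le]
  apply le_csInf
  · exact ⟨⟪v, θt - θt⟫, ⟨θt, ⟨hθt, by simp⟩, rfl⟩⟩
  · rintro b ⟨θ, ⟨hθ, h1⟩, rfl⟩
    exact key θ hθ h1
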